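/- Gremban reduction: let A = D + A_neg + A_pos be an SDD matrix where D is its diagonal, A_neg its negative off-diagonal part, and A_pos its positive off-diagonal part, and define the block matrix Â = [[D + A_neg, −A_pos], [−A_pos, D + A_neg]] and b̂ = (b, −b). If (x₁, x₂) solves Â(x₁,x₂) = b̂, then x = (x₁ − x₂)/2 solves Ax = b. -/

import Mathlib

open Matrix

/-- Gremban reduction: let `A` be a symmetric diagonally dominant matrix, written as
`A = D + A_neg + A_pos` with `D` its diagonal, `A_neg` its negative off-diagonal part
and `A_pos` its positive off-diagonal part, and let
`Â = [[D + A_neg, −A_pos], [−A_pos, D + A_neg]]`, `b̂ = (b, −b)`. If `Ax = b` has a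
solution and `Â(x₁,x₂) = b̂`, then `x = (x₁ − x₂)/2` solves `Ax = b`. -/
theorem gremban_reduction {N : ℕ} (A : Matrix (Fin N) (Fin N) ℝ)
    (hsymm : A.IsSymm)
    (hsdd : ∀ i, ∑ j ∈ Finset.univ.erase i, |A i j| ≤ A i i)
    (D Aneg Apos : Matrix (Fin N) (Fin N) ℝ)
    (hD : D = Matrix.diagonal (fun i => A i i))
    (hAneg : Aneg = fun i j => if i = j then 0 else min (A i j) 0)
    (hApos : Apos = fun i j => if i = j then 0 else max (A i j) 0)
    (b : Fin N → ℝ) (hsol : ∃ x₀ : Fin N → ℝ, A.mulVec x₀ = b)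
    (x₁ x₂ : Fin N → ℝ)
    (hhat : (Matrix.fromBlocks (D + Aneg) (-Apos) (-Apos) (D + Aneg)).mulVec
        (Sum.elim x₁ x₂) = Sum.elim b (-b)) :
    A.mulVec ((1 / 2 : ℝ) • (x₁ - x₂)) = b := by
  have hA : A = D + Aneg + Apos := by
    ext i j
    by_cases h : i = j
    · subst h
      rw [Matrix.add_apply, Matrix.add_apply, hD, hAneg, hApos]
      simp
    · rw [Matrix.add_apply, Matrix.add_apply, hD, hAneg, hApos]
      simp [Matrix.diagonal_apply_ne _ h, h, min_add_max]
  rw [fromBlocks_mulVec] at hhat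
  have h1 := congrFun hhat
  have e1 : (D + Aneg).mulVec x₁ + (-Apos).mulVec x₂ = b := by
    funext i; simpa using h1 (Sum.inl i)
  have e2 : (-Apos).mulVec x₁ + (D + Aneg).mulVec x₂ = -b := by
    funext i; simpa using h1 (Sum.inr i)
  have key : A.mulVec (x₁ - x₂) = b + b := by
    have := congrArg₂ (· - ·) e1 e2
    rw [hA]
    funext i
    have h := congrFun this i
    simp [Matrix.mulVec_sub, Matrix.add_mulVec, Matrix.neg_mulVec, Pi.add_apply,
      Pi.sub_apply, Pi.neg_apply] at h ⊢
    linarith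
  funext i
  have h := congrFun key i
  simp [Matrix.mulVec_smul] at h ⊢
  linarith
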